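/- For every i ∈ ℤ the following identities hold on the monotone Fock space: a†_{i+1} a_{i+1} = a_i a_i† − a_{i+1} a†_{i+1}, and, writing s_j := a_j + a_j†, one has s_i s_{i+1}² = a_i†. -/
import Mathlib


open scoped InnerProductSpace ComplexOrder
open ContinuousLinearMap Filter

noncomputable section

/-- The monotone Fock space `F_m = ℓ²(Finset ℤ)`, the Hilbert space of square-summable
complex families indexed by the finite subsets of `ℤ`. -/
abbrev Fm : Type := lp (fun _ : Finset ℤ => ℂ) 2

/-- The canonical orthonormal basis vector `e_A`, for `A` a finite subset of `ℤ`;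
`e ∅` is the vacuum vector `Ω`. -/
noncomputable def e (A : Finset ℤ) : Fm := lp.single 2 A 1

/-- `adag` is the family of monotone creation operators: `adag i` sends `e A` to
`e (A ∪ {i})` if `A = ∅` or `i < min A` (equivalently, `i < j` for all `j ∈ A`),
and to `0` otherwise. -/
def CreatesOn (adag : ℤ → (Fm →L[ℂ] Fm)) : Prop :=
  ∀ (i : ℤ) (A : Finset ℤ),
    adag i (e A) = if ∀ j ∈ A, i < j then e (insert i A) else 0

/-- `a` is the family of monotone annihilation operators: `a i` sends `e A` to
`e (A \ {i})` if `A ≠ ∅` and `i = min A` (equivalently, `i ∈ A` and `i ≤ j` for all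
`j ∈ A`), and to `0` otherwise. -/
def AnnihilatesOn (a : ℤ → (Fm →L[ℂ] Fm)) : Prop :=
  ∀ (i : ℤ) (A : Finset ℤ),
    a i (e A) = if i ∈ A ∧ ∀ j ∈ A, i ≤ j then e (A.erase i) else 0

/-- Two bounded operators on the monotone Fock space agreeing on all basis vectors are equal. -/
lemma ext_of_e {T S : Fm →L[ℂ] Fm} (h : ∀ A, T (e A) = S (e A)) : T = S := by
  ext f
  have hs := lp.hasSum_single (E := fun _ : Finset ℤ => ℂ) (p := 2) (by norm_num) f
  have key : ∀ A : Finset ℤ, lp.single 2 A (f A) = f A • e A := by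
    intro A
    rw [e, ← lp.single_smul, smul_eq_mul, mul_one]
  have hT : HasSum (fun A => f A • T (e A)) (T f) := by
    have := hs.mapL T
    simpa [key, map_smul] using this
  have hS : HasSum (fun A => f A • S (e A)) (S f) := by
    have := hs.mapL S
    simpa [key, map_smul] using this
  simp only [h] at hT
  rw [hT.unique hS]

/-- For every `i ∈ ℤ`: `a†_{i+1} a_{i+1} = a_i a_i† − a_{i+1} a†_{i+1}`, and, writing
`s_j := a_j + a_j†`, one has `s_i s_{i+1}² = a_i†`. -/
theorem monotone_selfadjoint_part_identities
    (a adag : ℤ → (Fm →L[ℂ] Fm))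
    (ha : AnnihilatesOn a) (hadag : CreatesOn adag) (i : ℤ) :
    adag (i + 1) * a (i + 1) = a i * adag i - a (i + 1) * adag (i + 1) ∧
    (a i + adag i) * (a (i + 1) + adag (i + 1)) ^ 2 = adag i := by
  -- Some computations of compositions on basis vectors.
  have hAdagA : ∀ (k : ℤ) (A : Finset ℤ),
      adag k (a k (e A)) = if k ∈ A ∧ ∀ j ∈ A, k ≤ j then e A else 0 := by
    intro k A
    rw [ha]
    split_ifs with h
    · rw [hadag, if_pos, Finset.insert_erase h.1]
      intro j hj
      have := h.2 j (Finset.mem_of_mem_erase hj)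
      have := Finset.ne_of_mem_erase hj
      omega
    · simp
  have hAAdag : ∀ (k : ℤ) (A : Finset ℤ),
      a k (adag k (e A)) = if ∀ j ∈ A, k < j then e A else 0 := by
    intro k A
    rw [hadag]
    split_ifs with h
    · have hk : k ∉ A := fun hk => absurd (h k hk) (lt_irrefl k)
      rw [ha, if_pos, Finset.erase_insert hk]
      refine ⟨Finset.mem_insert_self k A, ?_⟩
      intro j hj
      rcases Finset.mem_insert.mp hj with rfl | hj
      · exact le_refl j
      · exact le_of_lt (h j hj)
    · simp
  -- Square of `s_{i+1}` on a basis vector, when all elements of `A` exceed `i`.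
  have hSq : ∀ A : Finset ℤ, (∀ j ∈ A, i < j) →
      (a (i+1) + adag (i+1)) ((a (i+1) + adag (i+1)) (e A)) = e A := by
    intro A hA
    by_cases hm : (i+1) ∈ A
    · have h1 : (i+1) ∈ A ∧ ∀ j ∈ A, i+1 ≤ j := ⟨hm, fun j hj => by have := hA j hj; omega⟩
      simp only [ContinuousLinearMap.add_apply]
      rw [ha, if_pos h1, hadag]
      rw [if_neg (fun h => absurd (h (i+1) hm) (lt_irrefl _)), add_zero]
      rw [ha, hadag]
      have hcond : ∀ j ∈ A.erase (i+1), i+1 < j := by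
        intro j hj
        have := h1.2 j (Finset.mem_of_mem_erase hj)
        have := Finset.ne_of_mem_erase hj
        omega
      rw [if_neg (fun h => absurd h.1 (Finset.notMem_erase _ _)), if_pos hcond,
        Finset.insert_erase hm, zero_add]
    · have hlt : ∀ j ∈ A, i+1 < j := by
        intro j hj
        have := hA j hj
        rcases eq_or_ne j (i+1) with rfl | hne
        · exact absurd hj hm
        · omega
      simp only [ContinuousLinearMap.add_apply]
      rw [ha, if_neg (fun h => absurd h.1 hm), hadag, if_pos hlt, zero_add]
      rw [ha, hadag]
      have h1 : (i+1) ∈ insert (i+1) A ∧ ∀ j ∈ insert (i+1) A, i+1 ≤ j := by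
        refine ⟨Finset.mem_insert_self _ _, fun j hj => ?_⟩
        rcases Finset.mem_insert.mp hj with rfl | hj
        · exact le_refl _
        · exact le_of_lt (hlt j hj)
      rw [if_pos h1, if_neg (fun h => absurd (h (i+1) (Finset.mem_insert_self _ _)) (lt_irrefl _)),
        Finset.erase_insert hm, add_zero]
  -- When some element of `A` is `≤ i`, `s_{i+1}` kills `e A`.
  have hKill : ∀ A : Finset ℤ, ¬ (∀ j ∈ A, i < j) →
      (a (i+1) + adag (i+1)) (e A) = 0 := by
    intro A hA
    push_neg at hA
    obtain ⟨j₀, hj₀, hj₀le⟩ := hA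
    simp only [ContinuousLinearMap.add_apply]
    rw [ha, if_neg, hadag, if_neg, add_zero]
    · intro h
      have := h j₀ hj₀
      omega
    · intro h
      have := h.2 j₀ hj₀
      omega
  constructor
  · apply ext_of_e
    intro A
    simp only [ContinuousLinearMap.mul_apply, ContinuousLinearMap.sub_apply]
    rw [hAdagA, hAAdag, hAAdag]
    by_cases h1 : (i+1) ∈ A ∧ ∀ j ∈ A, i+1 ≤ j
    · rw [if_pos h1, if_pos (fun j hj => by have := h1.2 j hj; omega),
        if_neg (fun h => absurd (h (i+1) h1.1) (lt_irrefl _)), sub_zero]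
    · rw [if_neg h1]
      by_cases h2 : ∀ j ∈ A, i < j
      · have hm : (i+1) ∉ A := by
          intro hm
          exact h1 ⟨hm, fun j hj => by have := h2 j hj; omega⟩
        have h3 : ∀ j ∈ A, i+1 < j := by
          intro j hj
          have := h2 j hj
          rcases eq_or_ne j (i+1) with rfl | hne
          · exact absurd hj hm
          · omega
        rw [if_pos h2, if_pos h3, sub_self]
      · rw [if_neg h2, if_neg (fun h => h2 (fun j hj => by have := h j hj; omega)), sub_zero]
  · apply ext_of_e
    intro A
    simp only [ContinuousLinearMap.mul_apply, sq, ContinuousLinearMap.add_apply]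
    by_cases hA : ∀ j ∈ A, i < j
    · have := hSq A hA
      simp only [ContinuousLinearMap.add_apply] at this
      rw [this, ha, hadag, if_neg (fun h => absurd (hA i h.1) (lt_irrefl i)), if_pos hA, zero_add]
    · have := hKill A hA
      simp only [ContinuousLinearMap.add_apply] at this
      rw [this]
      simp only [map_zero, add_zero, zero_add]
      rw [hadag, if_neg hA]
end
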